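/- Let X' ⊆ X be an open subspace. Then the map Φ : 𝒮_X → 𝒮_{X'} sending a closed lower subset S of X to S ∩ X' is continuous, where each space carries the topology generated by the sets V_U and V^x. -/

import Mathlib

open Set TopologicalSpace

/-- `H` is a lower set with respect to the strict order: `x ∈ H` and `y < x` imply `y ∈ H`. -/
def IsLowerLt {X : Type*} [LT X] (H : Set X) : Prop :=
  ∀ ⦃x⦄, x ∈ H → ∀ ⦃y⦄, y < x → y ∈ H


/-- The space `𝒮_Y` of topologically closed lower subsets of `Y`. -/
def SSpace (Y : Type*) [TopologicalSpace Y] [LT Y] : Type _ :=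
  {S : Set Y // IsClosed S ∧ IsLowerLt S}

/-- The topology on `𝒮_Y` generated by the sets `V_U = {S : S ∩ U ≠ ∅}` for `U` open and
`V^x = {S : x ∉ S}` for `x ∈ Y`. -/
def STopologyPt (Y : Type*) [TopologicalSpace Y] [LT Y] : TopologicalSpace (SSpace Y) :=
  TopologicalSpace.generateFrom
    ({W | ∃ U : Set Y, IsOpen U ∧ W = {S : SSpace Y | (S.1 ∩ U).Nonempty}} ∪
     {W | ∃ x : Y, W = {S : SSpace Y | x ∉ S.1}})

/-- For `X' ⊆ X` open, the restriction map `S ↦ S ∩ X'` from `𝒮_X` to `𝒮_{X'}`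
is continuous. -/
theorem restriction_continuous (X : Type*) [TopologicalSpace X] [PartialOrder X]
    (hR : IsOpen {p : X × X | p.1 < p.2})
    (hsb : ∀ x : X, x ∈ closure {y | y < x})
    (X' : Set X) (hX' : IsOpen X') :
    @Continuous (SSpace X) (SSpace X') (STopologyPt X) (STopologyPt X')
      (fun S => ⟨Subtype.val ⁻¹' S.1,
        S.2.1.preimage continuous_subtype_val,
        fun x hx y hy => S.2.2 hx (Subtype.coe_lt_coe.2 hy)⟩) := by
  letI : TopologicalSpace (SSpace X) := STopologyPt X
  refine continuous_generateFrom_iff.2 ?_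
  rintro W (⟨U, hU, rfl⟩ | ⟨x, rfl⟩)
  · obtain ⟨V, hV, rfl⟩ := isOpen_induced_iff.1 hU
    apply TopologicalSpace.isOpen_generateFrom_of_mem
    refine Or.inl ⟨V ∩ X', hV.inter hX', ?_⟩
    ext S
    simp only [mem_preimage, mem_setOf_eq]
    constructor
    · rintro ⟨⟨y, hy⟩, hyS, hyV⟩
      exact ⟨y, ⟨hyS, hyV, hy⟩⟩
    · rintro ⟨y, hyS, hyV, hy⟩
      exact ⟨⟨y, hy⟩, hyS, hyV⟩
  · apply TopologicalSpace.isOpen_generateFrom_of_mem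
    exact Or.inr ⟨x.1, rfl⟩
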